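/- Theorem 1 (invariance of the SRA solution under the transformation F_{s,Δ}): let C be a diagonal positive definite 2m×2m real matrix with C_{jj} = C_{j+m,j+m} for j = 1,…,m. Interpret the real 2m-dimensional stacking of a complex m-vector w as (Re w, Im w). Then for any s > 0 and Δ ∈ ℝ, the Mahalanobis constraint set {x ≥ 0 : (Φx−v)ᵀC⁻¹(Φx−v) ≤ ε²‖v‖²} equals the set {x ≥ 0 : (Φ'x−v')ᵀC⁻¹(Φ'x−v') ≤ ε²s²‖v‖²}, where Φ' and v' are the stackings of F_{s,Δ}Φ_c and F_{s,Δ}v_c (Φ_c, v_c the complex versions). Consequently, the minimizer of ‖x‖₁ over the first set equals the minimizer over the set with v replaced by F_{s,Δ}v and Φ by F_{s,Δ}Φ. -/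

import Mathlib

open Complex Real

/-- The matrix F_{s,Δ} = s · diag(e^{−2πiΔ/λ₁},…,e^{−2πiΔ/λ_m}). -/
noncomputable def Fmat {m : ℕ} (s Δ : ℝ) (lam : Fin m → ℝ) : Matrix (Fin m) (Fin m) ℂ :=
  Matrix.diagonal (fun k => (s : ℂ) * Complex.exp (-(2 * π * Complex.I * Δ) / (lam k)))

/-- Stacking of a complex m-vector into ℝ^{2m}: real parts first, then imaginary parts. -/
def stack {m : ℕ} (w : Fin m → ℂ) : (Fin m ⊕ Fin m) → ℝ :=
  Sum.elim (fun j => (w j).re) (fun j => (w j).im)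

/-- Feasible set of the stacked SRA problem with Mahalanobis constraint and
right-hand side `rhs`. -/
def feas {m n : ℕ} (Φc : Matrix (Fin m) (Fin n) ℂ) (vc : Fin m → ℂ)
    (C : Matrix (Fin m ⊕ Fin m) (Fin m ⊕ Fin m) ℝ) (rhs : ℝ) : Set (Fin n → ℝ) :=
  {x | (∀ i, 0 ≤ x i) ∧
    dotProduct (stack (Φc.mulVec (fun j => (x j : ℂ)) - vc))
      ((C⁻¹).mulVec (stack (Φc.mulVec (fun j => (x j : ℂ)) - vc))) ≤ rhs}

lemma quad_eq {m : ℕ} (c : Fin m → ℝ) (hc : ∀ j, 0 < c j) (u : Fin m → ℂ) :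
    dotProduct (stack u)
      (((Matrix.diagonal (Sum.elim c c) : Matrix (Fin m ⊕ Fin m) (Fin m ⊕ Fin m) ℝ)⁻¹).mulVec (stack u))
      = ∑ j, (c j)⁻¹ * Complex.normSq (u j) := by
  have hinv : (Matrix.diagonal (Sum.elim c c) : Matrix (Fin m ⊕ Fin m) (Fin m ⊕ Fin m) ℝ)⁻¹
      = Matrix.diagonal (fun i => (Sum.elim c c i)⁻¹) := by
    apply Matrix.inv_eq_right_inv
    rw [Matrix.diagonal_mul_diagonal]
    have : (fun i => Sum.elim c c i * (Sum.elim c c i)⁻¹) = fun _ => (1 : ℝ) := by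
      funext i
      cases i with
      | inl j => simp [mul_inv_cancel₀ (hc j).ne']
      | inr j => simp [mul_inv_cancel₀ (hc j).ne']
    rw [this, Matrix.diagonal_one]
  rw [hinv]
  simp [dotProduct, Matrix.mulVec_diagonal, Fintype.sum_sum_type, stack,
    Complex.normSq_apply]
  rw [← Finset.sum_add_distrib]
  congr 1; ext j; ring

lemma Fmat_normSq {m : ℕ} (s Δ : ℝ) (lam : Fin m → ℝ) (w : Fin m → ℂ) (j : Fin m) :
    Complex.normSq ((Fmat s Δ lam).mulVec w j) = s ^ 2 * Complex.normSq (w j) := by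
  have hre : (-(2 * π * Complex.I * Δ) / (lam j : ℂ)).re = 0 := by
    rw [Complex.div_ofReal_re]
    simp
  have habs : ‖Complex.exp (-(2 * π * Complex.I * Δ) / (lam j : ℂ))‖ = 1 := by
    rw [Complex.norm_exp, hre, Real.exp_zero]
  have hnsq : Complex.normSq (Complex.exp (-(2 * π * Complex.I * Δ) / (lam j : ℂ))) = 1 := by
    rw [← Complex.sq_norm, habs]; norm_num
  simp only [Fmat, Matrix.mulVec_diagonal, Complex.normSq_mul, hnsq, Complex.normSq_ofReal]
  ring

/-- Theorem 1: with a diagonal covariance having equal variances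
for the real and imaginary parts of each frequency, the feasible set is invariant
under the transformation F_{s,Δ} (with the tolerance scaled by s²), and hence so
is the L1 minimizer. -/
theorem stmt_4 {m n : ℕ} (Φc : Matrix (Fin m) (Fin n) ℂ) (vc : Fin m → ℂ)
    (lam : Fin m → ℝ) (hlam : ∀ k, 0 < lam k)
    (c : Fin m → ℝ) (hc : ∀ j, 0 < c j)
    (C : Matrix (Fin m ⊕ Fin m) (Fin m ⊕ Fin m) ℝ)
    (hC : C = Matrix.diagonal (Sum.elim c c))
    (ε : ℝ) (hε : 0 < ε) (s Δ : ℝ) (hs : 0 < s) :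
    feas ((Fmat s Δ lam) * Φc) ((Fmat s Δ lam).mulVec vc) C
        (ε ^ 2 * s ^ 2 * ∑ k, ‖vc k‖ ^ 2)
      = feas Φc vc C (ε ^ 2 * ∑ k, ‖vc k‖ ^ 2) ∧
    ∀ xstar : Fin n → ℝ,
      (xstar ∈ feas Φc vc C (ε ^ 2 * ∑ k, ‖vc k‖ ^ 2) ∧
        ∀ y ∈ feas Φc vc C (ε ^ 2 * ∑ k, ‖vc k‖ ^ 2), ∑ i, |xstar i| ≤ ∑ i, |y i|)
      ↔
      (xstar ∈ feas ((Fmat s Δ lam) * Φc) ((Fmat s Δ lam).mulVec vc) C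
          (ε ^ 2 * s ^ 2 * ∑ k, ‖vc k‖ ^ 2) ∧
        ∀ y ∈ feas ((Fmat s Δ lam) * Φc) ((Fmat s Δ lam).mulVec vc) C
          (ε ^ 2 * s ^ 2 * ∑ k, ‖vc k‖ ^ 2), ∑ i, |xstar i| ≤ ∑ i, |y i|) := by
  have hsq : 0 < s ^ 2 := by positivity
  have hmain : feas ((Fmat s Δ lam) * Φc) ((Fmat s Δ lam).mulVec vc) C
        (ε ^ 2 * s ^ 2 * ∑ k, ‖vc k‖ ^ 2)
      = feas Φc vc C (ε ^ 2 * ∑ k, ‖vc k‖ ^ 2) := by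
    ext x
    subst hC
    simp only [feas, Set.mem_setOf_eq, and_congr_right_iff]
    intro _
    have hvec : ((Fmat s Δ lam) * Φc).mulVec (fun j => (x j : ℂ)) - (Fmat s Δ lam).mulVec vc
        = (Fmat s Δ lam).mulVec (Φc.mulVec (fun j => (x j : ℂ)) - vc) := by
      rw [Matrix.mulVec_sub, ← Matrix.mulVec_mulVec]
    rw [hvec, quad_eq c hc, quad_eq c hc]
    have hsum : ∑ j, (c j)⁻¹ * Complex.normSq ((Fmat s Δ lam).mulVec
          (Φc.mulVec (fun j => (x j : ℂ)) - vc) j)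
        = s ^ 2 * ∑ j, (c j)⁻¹ * Complex.normSq ((Φc.mulVec (fun j => (x j : ℂ)) - vc) j) := by
      rw [Finset.mul_sum]
      congr 1; ext j
      rw [Fmat_normSq]; ring
    rw [hsum]
    constructor
    · intro h
      have := (mul_le_mul_iff_of_pos_left hsq).mp (by linarith [h] : s ^ 2 * ∑ j, (c j)⁻¹ *
        Complex.normSq ((Φc.mulVec (fun j => (x j : ℂ)) - vc) j) ≤ s ^ 2 * (ε ^ 2 * ∑ k, ‖vc k‖ ^ 2))
      linarith
    · intro h
      have := (mul_le_mul_iff_of_pos_left hsq).mpr h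
      linarith
  refine ⟨hmain, fun xstar => ?_⟩
  rw [hmain]
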